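/- If the spherical curve c is a great circle through (1,0,0) with initial velocity (0,1,a₁₁)/√(1+a₁₁²), then the ruled surface f_c(u,v) = γ(v) + uξ(v) of the construction above is congruent to the degenerate quadratic cross cap f₀(u,v) = (u, uv, a₁₁uv + (a₀₂/2)v²). -/

import Mathlib

noncomputable section
open Real Filter

/-- Euclidean dot product on ℝ³ (as ℝ × ℝ × ℝ). -/
def dot3 (a b : ℝ × ℝ × ℝ) : ℝ := a.1 * b.1 + a.2.1 * b.2.1 + a.2.2 * b.2.2

/-- Cross product on ℝ³. -/
def cross3 (a b : ℝ × ℝ × ℝ) : ℝ × ℝ × ℝ :=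
  (a.2.1 * b.2.2 - a.2.2 * b.2.1, a.2.2 * b.1 - a.1 * b.2.2, a.1 * b.2.1 - a.2.1 * b.1)

/-- Determinant of three column vectors in ℝ³. -/
def det3 (a b c : ℝ × ℝ × ℝ) : ℝ := dot3 (cross3 a b) c

/-- Euclidean norm on ℝ³. -/
def norm3 (a : ℝ × ℝ × ℝ) : ℝ := Real.sqrt (dot3 a a)

/-- Partial derivative in the first variable. -/
def p1 {E : Type*} [NormedAddCommGroup E] [NormedSpace ℝ E] (f : ℝ → ℝ → E) (u v : ℝ) : E :=
  deriv (fun t => f t v) u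

/-- Partial derivative in the second variable. -/
def p2 {E : Type*} [NormedAddCommGroup E] [NormedSpace ℝ E] (f : ℝ → ℝ → E) (u v : ℝ) : E :=
  deriv (fun t => f u t) v

/-- if `c` is the great circle through `(1,0,0)` with initial velocity
`(0,1,a₁₁)/√(1+a₁₁²)`, then `f_c` is congruent to the degenerate quadratic cross cap. -/
theorem stmt_5 (a02 a11 : ℝ) (ha02 : 0 < a02) (c : ℝ → ℝ × ℝ × ℝ)
    (hc : ∀ s : ℝ, c s =
      Real.cos s • ((1:ℝ), (0:ℝ), (0:ℝ)) +
      Real.sin s • ((Real.sqrt (1 + a11 ^ 2))⁻¹ • ((0:ℝ), (1:ℝ), a11))) :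
    let ξ : ℝ → ℝ × ℝ × ℝ := fun v =>
      Real.sqrt (1 + (1 + a11 ^ 2) * v ^ 2) •
        c (Real.arctan (v * Real.sqrt (1 + a11 ^ 2)))
    let B : ℝ → ℝ × ℝ × ℝ := fun v => a11 • deriv ξ v + cross3 (ξ v) (deriv ξ v)
    let γ : ℝ → ℝ × ℝ × ℝ := fun v => (a02 / (1 + a11 ^ 2)) • ∫ t in (0:ℝ)..v, t • B t
    let fc : ℝ → ℝ → ℝ × ℝ × ℝ := fun u v => γ v + u • ξ v
    let f0 : ℝ → ℝ → ℝ × ℝ × ℝ :=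
      fun u v => (u, u * v, a11 * u * v + a02 / 2 * v ^ 2)
    ∃ (O : (ℝ × ℝ × ℝ) →ₗ[ℝ] ℝ × ℝ × ℝ) (b : ℝ × ℝ × ℝ),
      (∀ x y : ℝ × ℝ × ℝ, dot3 (O x) (O y) = dot3 x y) ∧
      ∀ u v : ℝ, fc u v = O (f0 u v) + b := by

  intro ξ B γ fc f0
  have hpos : (0:ℝ) < 1 + a11 ^ 2 := by positivity
  have hα : Real.sqrt (1 + a11 ^ 2) ^ 2 = 1 + a11 ^ 2 := Real.sq_sqrt hpos.le
  have hαpos : 0 < Real.sqrt (1 + a11 ^ 2) := Real.sqrt_pos.mpr hpos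
  have hξ : ξ = fun v => ((1:ℝ), v, a11 * v) := by
    funext v
    have h1 : 1 + (1 + a11 ^ 2) * v ^ 2 = 1 + (v * Real.sqrt (1 + a11 ^ 2)) ^ 2 := by
      rw [mul_pow, hα]; ring
    have hS : 0 < Real.sqrt (1 + (v * Real.sqrt (1 + a11 ^ 2)) ^ 2) :=
      Real.sqrt_pos.mpr (by positivity)
    simp only [ξ, hc, Real.cos_arctan, Real.sin_arctan, h1, Prod.smul_mk, smul_eq_mul,
      Prod.mk_add_mk, smul_add]
    refine Prod.ext ?_ (Prod.ext ?_ ?_) <;> simp <;> field_simp <;> ring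
  have hderiv : ∀ v : ℝ, deriv ξ v = ((0:ℝ), (1:ℝ), a11) := by
    intro v
    rw [hξ]
    have h : HasDerivAt (fun v : ℝ => ((1:ℝ), v, a11 * v)) ((0:ℝ), (1:ℝ), a11) v := by
      refine HasDerivAt.prodMk (hasDerivAt_const v (1:ℝ)) (HasDerivAt.prodMk (hasDerivAt_id v) ?_)
      simpa using (hasDerivAt_id v).const_mul a11
    exact h.deriv
  have hB : ∀ v : ℝ, B v = ((0:ℝ), (0:ℝ), 1 + a11 ^ 2) := by
    intro v
    simp only [B, hderiv]
    simp only [hξ, cross3, Prod.smul_mk, smul_eq_mul, Prod.mk_add_mk]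
    refine Prod.ext ?_ (Prod.ext ?_ ?_) <;> simp <;> ring
  have hγ : ∀ v : ℝ, γ v = ((0:ℝ), (0:ℝ), a02 / 2 * v ^ 2) := by
    intro v
    have : (fun t : ℝ => t • B t) = fun t : ℝ => t • (((0:ℝ), (0:ℝ), 1 + a11 ^ 2) : ℝ × ℝ × ℝ) := by
      funext t; rw [hB]
    simp only [γ, this, intervalIntegral.integral_smul_const, integral_id]
    refine Prod.ext ?_ (Prod.ext ?_ ?_) <;>
      simp [Prod.smul_mk, smul_eq_mul] <;> field_simp <;> ring
  refine ⟨LinearMap.id, 0, fun x y => rfl, fun u v => ?_⟩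
  simp only [fc, f0, hγ, hξ, LinearMap.id_coe, id_eq, add_zero, Prod.smul_mk, smul_eq_mul,
    Prod.mk_add_mk]
  refine Prod.ext ?_ (Prod.ext ?_ ?_) <;> simp <;> ring
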